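/- For every integer k ≥ 1 and every real L > 0, there exists a complete directed graph G on a finite vertex set (with at least k+2 vertices) with arc lengths ℓ such that: the maximum of |ℓ_e| over all arcs e equals L; every cycle of cardinality at most k+1 has nonnegative length; and the minimum mean length of a cycle in G equals −L/k (in particular, some cycle has mean length exactly −L/k). -/
import Mathlib


open Finset

/-- Euclidean inner product on `ℝⁿ`. -/
def dotp {n : ℕ} (p y : Fin n → ℝ) : ℝ := ∑ i, p i * y i

/-- A bundle is a 0-1 vector. -/
def IsBundle {n : ℕ} (y : Fin n → ℝ) : Prop := ∀ i, y i = 0 ∨ y i = 1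

/-- The cyclically next index in `Fin m`. -/
def cnext {m : ℕ} (i : Fin m) : Fin m := ⟨(i.val + 1) % m, Nat.mod_lt _ i.pos⟩

-- The length of the arc of the bidding graph from bid bundle `x t` to bundle `y`:
-- the minimum of `p s · (y - x t)` over all observations `s` bidding the same bundle as `t`.
open Classical in
noncomputable def arcLen {n T : ℕ} (p x : Fin T → Fin n → ℝ) (t : Fin T)
    (y : Fin n → ℝ) : ℝ :=
  (Finset.univ.filter fun s => x s = x t).inf' ⟨t, by simp⟩
    (fun s => dotp (p s) (y - x t))

/-- `v` is an `ε`-approximate virtual valuation function for the data `(p, x)`. -/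
def IsApproxVV  {n T : ℕ} (p x : Fin T → Fin n → ℝ) (ε : ℝ)
    (v : (Fin n → ℝ) → ℝ) : Prop :=
  ∀ t : Fin T, ∀ y : Fin n → ℝ, IsBundle y →
    v (x t) - dotp (p t) (x t) ≥ v y - dotp (p t) y - ε

/-- `v` is individually rational for the data `(p, x)`. -/
def IndivRational {n T : ℕ} (p x : Fin T → Fin n → ℝ)
    (v : (Fin n → ℝ) → ℝ) : Prop :=
  ∀ t : Fin T, v (x t) ≥ dotp (p t) (x t)

/-- The set of mean lengths of cycles of the bidding graph. -/
noncomputable def meanCycleLens {n T : ℕ} (p x : Fin T → Fin n → ℝ) : Set ℝ :=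
  {r | ∃ m : ℕ, 2 ≤ m ∧ ∃ c : Fin m → Fin T,
      Function.Injective (fun i => x (c i)) ∧
      r = (∑ i : Fin m, arcLen p x (c i) (x (c (cnext i)))) / m}
lemma no_all_plus_one {N m : ℕ} (hm : 2 ≤ m) (hmN : m < N) (c : Fin m → Fin N)
    (h : ∀ i : Fin m, (c (cnext i)).val = ((c i).val + 1) % N) : False := by
  haveI : NeZero N := ⟨by omega⟩
  have h' : ∀ i : Fin m, ((c (cnext i)).val : ZMod N) = ((c i).val : ZMod N) + 1 := by
    intro i
    rw [h i]
    push_cast [ZMod.natCast_mod]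
    ring
  have key : ∀ j : ℕ, (hj : j < m) →
      ((c ⟨j, hj⟩).val : ZMod N) = ((c ⟨0, by omega⟩).val : ZMod N) + j := by
    intro j
    induction j with
    | zero => intro hj; simp
    | succ n ih =>
      intro hj
      have hn : n < m := by omega
      have hc : cnext (⟨n, hn⟩ : Fin m) = ⟨n + 1, hj⟩ := by
        simp [cnext, Nat.mod_eq_of_lt hj]
      have := h' ⟨n, hn⟩
      rw [hc, ih hn] at this
      rw [this]
      push_cast
      ring
  have hm1 : m - 1 + 1 = m := by omega
  have hlast : cnext (⟨m - 1, by omega⟩ : Fin m) = ⟨0, by omega⟩ := by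
    apply Fin.ext
    simp [cnext, hm1]
  have heq := h' ⟨m - 1, by omega⟩
  rw [hlast, key (m - 1) (by omega)] at heq
  rw [add_assoc] at heq
  have hx : ((m - 1 : ℕ) : ZMod N) + 1 = 0 := by linear_combination -heq
  have hm0 : ((m : ℕ) : ZMod N) = 0 := by
    have h2 : ((m - 1 : ℕ) : ZMod N) + 1 = ((m : ℕ) : ZMod N) := by
      rw [← hm1]; push_cast; ring
    rw [← h2, hx]
  have hdvd := (ZMod.natCast_eq_zero_iff m N).mp hm0
  have := Nat.le_of_dvd (by omega) hdvd
  omega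

/-- Tightness of Theorem `kcycle`: there is a complete directed graph with
maximum absolute arc length `L` in which every cycle of cardinality at most `k+1` has
nonnegative length, yet the minimum mean length of a cycle equals `-L / k`. -/
theorem exists_graph_short_cycles_nonneg_minMean_eq {k : ℕ} (hk : 1 ≤ k)
    {L : ℝ} (hL : 0 < L) :
    ∃ (N : ℕ) (ℓ : Fin N → Fin N → ℝ),
      k + 2 ≤ N ∧
      IsGreatest {r : ℝ | ∃ a b : Fin N, a ≠ b ∧ r = |ℓ a b|} L ∧
      (∀ m : ℕ, 2 ≤ m → m ≤ k + 1 → ∀ c : Fin m → Fin N, Function.Injective c →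
        0 ≤ ∑ i : Fin m, ℓ (c i) (c (cnext i))) ∧
      IsLeast {r : ℝ | ∃ m : ℕ, 2 ≤ m ∧ ∃ c : Fin m → Fin N, Function.Injective c ∧
        r = (∑ i : Fin m, ℓ (c i) (c (cnext i))) / m} (-(L / k)) := by
  set N := k + 2 with hN
  have hk0 : (0 : ℝ) < k := by exact_mod_cast hk
  have hA : (0 : ℝ) < L / k := div_pos hL hk0
  have hAk : L / k * k = L := div_mul_cancel₀ _ (ne_of_gt hk0)
  have hAL : L / k ≤ L := by
    rw [div_le_iff₀ hk0]
    nlinarith [mul_le_mul_of_nonneg_left (show (1:ℝ) ≤ k by exact_mod_cast hk) hL.le]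
  refine ⟨N, fun a b => if b.val = (a.val + 1) % N then -(L / k) else L, le_refl _, ?_, ?_, ?_⟩
  -- IsGreatest
  · constructor
    · refine ⟨⟨1, by omega⟩, ⟨0, by omega⟩, by simp [Fin.ext_iff], ?_⟩
      beta_reduce
      rw [if_neg (by simp [Nat.mod_eq_of_lt (show 1+1 < N by omega)])]
      exact (abs_of_pos hL).symm
    · rintro r ⟨a, b, hab, rfl⟩
      beta_reduce
      by_cases hcase : b.val = (a.val + 1) % N
      · rw [if_pos hcase, abs_neg, abs_of_pos hA]; exact hAL
      · rw [if_neg hcase, abs_of_pos hL]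
  -- short cycles nonneg
  · intro m hm2 hmk c hc
    set P : Fin m → Prop := fun i => (c (cnext i)).val = ((c i).val + 1) % N with hP
    classical
    set t := (univ.filter P).card with ht
    have htm : t ≤ m := by
      simpa using (card_filter_le univ P)
    have hsum : ∑ i : Fin m, (if (c (cnext i)).val = ((c i).val + 1) % N then -(L / k) else L)
        = t * (-(L / k)) + (m - t : ℕ) * L := by
      rw [← Finset.sum_filter_add_sum_filter_not univ P]
      rw [Finset.sum_congr rfl (fun i hi => if_pos ((Finset.mem_filter.mp hi).2)),
          Finset.sum_congr rfl (fun i hi => if_neg ((Finset.mem_filter.mp hi).2))]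
      have hcard : (univ.filter (fun i => ¬ P i)).card = m - t := by
        have h := Finset.card_filter_add_card_filter_not (s := univ) (p := P)
        simp only [Finset.card_univ, Fintype.card_fin] at h
        omega
      rw [Finset.sum_const, Finset.sum_const, hcard, nsmul_eq_mul, nsmul_eq_mul]
    rw [hsum]
    -- not all arcs are +1 steps
    have hnotall : ¬ (∀ i : Fin m, P i) := fun hall =>
      no_all_plus_one hm2 (by omega) c hall
    have htlt : t < m := by
      rcases lt_or_eq_of_le htm with h | h
      · exact h
      · exfalso
        apply hnotall
        intro i
        have heq : univ.filter P = univ :=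
          Finset.eq_univ_of_card _ (by rw [← ht, h, Fintype.card_fin])
        have hi : i ∈ univ.filter P := by rw [heq]; exact Finset.mem_univ i
        exact (Finset.mem_filter.mp hi).2
    -- t * (k+1) ≤ m * k
    have hkey : (t : ℝ) * (k + 1) ≤ (m : ℝ) * k := by
      have h1 : (t : ℝ) ≤ (m : ℝ) - 1 := by
        have : (t : ℝ) + 1 ≤ m := by exact_mod_cast htlt
        linarith
      have h2 : (m : ℝ) ≤ k + 1 := by exact_mod_cast hmk
      nlinarith
    have hcast : ((m - t : ℕ) : ℝ) = (m : ℝ) - t := by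
      push_cast [Nat.cast_sub htm]; ring
    rw [hcast]
    nlinarith [mul_nonneg hA.le (sub_nonneg.2 hkey)]
  -- IsLeast
  · constructor
    · refine ⟨N, by omega, id, Function.injective_id, ?_⟩
      have heach : ∀ i : Fin N,
          (if (id (cnext i) : Fin N).val = ((id i : Fin N).val + 1) % N then -(L / k) else L)
          = -(L / k) := by
        intro i
        rw [if_pos]
        rfl
      rw [Finset.sum_congr rfl (fun i _ => heach i), Finset.sum_const, Finset.card_univ,
        Fintype.card_fin, nsmul_eq_mul]
      rw [mul_comm, mul_div_assoc, div_self (by positivity : (N : ℝ) ≠ 0), mul_one]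
    · rintro r ⟨m, hm2, c, hc, rfl⟩
      set P : Fin m → Prop := fun i => (c (cnext i)).val = ((c i).val + 1) % N with hP
      classical
      set t := (univ.filter P).card with ht
      have htm : t ≤ m := by simpa using (card_filter_le univ P)
      have hsum : ∑ i : Fin m, (if (c (cnext i)).val = ((c i).val + 1) % N then -(L / k) else L)
          = t * (-(L / k)) + (m - t : ℕ) * L := by
        rw [← Finset.sum_filter_add_sum_filter_not univ P]
        rw [Finset.sum_congr rfl (fun i hi => if_pos ((Finset.mem_filter.mp hi).2)),
            Finset.sum_congr rfl (fun i hi => if_neg ((Finset.mem_filter.mp hi).2))]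
        have hcard : (univ.filter (fun i => ¬ P i)).card = m - t := by
          have h := Finset.card_filter_add_card_filter_not (s := univ) (p := P)
          simp only [Finset.card_univ, Fintype.card_fin] at h
          omega
        rw [Finset.sum_const, Finset.sum_const, hcard, nsmul_eq_mul, nsmul_eq_mul]
      rw [hsum]
      have hm0 : (0 : ℝ) < m := by exact_mod_cast (by omega : 0 < m)
      rw [le_div_iff₀ hm0]
      have hcast : ((m - t : ℕ) : ℝ) = (m : ℝ) - t := by
        push_cast [Nat.cast_sub htm]; ring
      rw [hcast]
      have htm' : (t : ℝ) ≤ m := by exact_mod_cast htm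
      nlinarith [mul_nonneg (sub_nonneg.2 htm') hA.le, mul_nonneg (sub_nonneg.2 htm') hL.le]
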